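/- Let S be a finite alphabet, let w ∈ S^n and let w' be a (contiguous) subword of w with |w| − |w'| ≤ d. Then for every word v of length k ≥ 1, the cyclic occurrence counts satisfy |⟨v,w⟩ − ⟨v,w'⟩| ≤ d + 2k. -/

import Mathlib

/-- Cyclic occurrence count: the number of indices `i ∈ {0,…,|w|-1}` such that
the word `v` occurs in the periodic extension `w^∞ = www⋯` starting at
position `i` (all positions read modulo `|w|`). -/
def cycCount {S : Type*} [DecidableEq S] (w v : List S) : ℕ :=
  ((Finset.range w.length).filter fun i =>
    ∀ j ∈ Finset.range v.length, w[(i + j) % w.length]? = v[j]?).card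

/-- Non-wrapping occurrence count. -/
def nwCount {S : Type*} [DecidableEq S] (w v : List S) : ℕ :=
  ((Finset.range w.length).filter fun i =>
    i + v.length ≤ w.length ∧ ∀ j ∈ Finset.range v.length, w[(i + j)]? = v[j]?).card

theorem mid_get {S : Type*} (p w' q : List S) (m : ℕ) (hm : m < w'.length) :
    (p ++ w' ++ q)[(p.length + m)]? = w'[m]? := by
  rw [List.append_assoc,
    List.getElem?_append_right (by omega : p.length ≤ p.length + m)]
  simp only [Nat.add_sub_cancel_left]
  exact List.getElem?_append_left hm

theorem nw_le_cyc {S : Type*} [DecidableEq S] (w v : List S) :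
    nwCount w v ≤ cycCount w v := by
  apply Finset.card_le_card
  intro i hi
  simp only [Finset.mem_filter, Finset.mem_range] at hi ⊢
  obtain ⟨hin, hlen, hmatch⟩ := hi
  refine ⟨hin, fun j hj => ?_⟩
  have hj' : j < v.length := hj
  rw [Nat.mod_eq_of_lt (by omega)]
  exact hmatch j hj

theorem cyc_le_nw {S : Type*} [DecidableEq S] (w v : List S) :
    cycCount w v ≤ nwCount w v + v.length := by
  unfold cycCount nwCount
  have hsub : ((Finset.range w.length).filter fun i =>
      ∀ j ∈ Finset.range v.length, w[((i + j) % w.length)]? = v[j]?) ⊆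
      ((Finset.range w.length).filter fun i =>
        i + v.length ≤ w.length ∧
          ∀ j ∈ Finset.range v.length, w[(i + j)]? = v[j]?) ∪
      Finset.Ico (w.length - v.length) w.length := by
    intro i hi
    simp only [Finset.mem_filter, Finset.mem_range, Finset.mem_union, Finset.mem_Ico] at hi ⊢
    obtain ⟨hin, hmatch⟩ := hi
    by_cases h : i + v.length ≤ w.length
    · refine Or.inl ⟨hin, h, fun j hj => ?_⟩
      have hj' : j < v.length := hj
      rw [← hmatch j hj, Nat.mod_eq_of_lt (by omega)]
    · exact Or.inr ⟨by omega, hin⟩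
  calc _ ≤ _ := Finset.card_le_card hsub
    _ ≤ _ := Finset.card_union_le _ _
    _ ≤ _ := by rw [Nat.card_Ico]; omega

theorem nw_mono {S : Type*} [DecidableEq S] (p w' q v : List S) :
    nwCount w' v ≤ nwCount (p ++ w' ++ q) v := by
  unfold nwCount
  apply Finset.card_le_card_of_injOn (fun i => p.length + i)
  · intro i hi
    simp only [Finset.mem_coe, Finset.mem_filter, Finset.mem_range, List.length_append] at hi ⊢
    obtain ⟨hin, hlen, hmatch⟩ := hi
    refine ⟨by omega, by omega, fun j hj => ?_⟩
    have hj' : j < v.length := hj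
    rw [show p.length + i + j = p.length + (i + j) by omega,
      mid_get p w' q _ (by omega)]
    exact hmatch j hj
  · intro a _ b _ h
    have h' : p.length + a = p.length + b := h
    omega

theorem nw_upper {S : Type*} [DecidableEq S] (p w' q v : List S) (hk1 : 1 ≤ v.length) :
    nwCount (p ++ w' ++ q) v ≤ nwCount w' v + (p.length + q.length) := by
  classical
  have hn : (p ++ w' ++ q).length = p.length + w'.length + q.length := by
    simp only [List.length_append, Nat.add_assoc]
  have hsplit : ((Finset.range (p ++ w' ++ q).length).filter fun i =>
      i + v.length ≤ (p ++ w' ++ q).length ∧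
        ∀ j ∈ Finset.range v.length, (p ++ w' ++ q)[(i + j)]? = v[j]?) ⊆
      (((Finset.range (p ++ w' ++ q).length).filter fun i =>
        (i + v.length ≤ (p ++ w' ++ q).length ∧
          ∀ j ∈ Finset.range v.length, (p ++ w' ++ q)[(i + j)]? = v[j]?) ∧
        p.length ≤ i ∧ i + v.length ≤ p.length + w'.length)
      ∪ Finset.range p.length)
      ∪ Finset.Ico (p.length + w'.length + 1 - v.length)
          ((p ++ w' ++ q).length + 1 - v.length) := by
    intro i hi
    simp only [Finset.mem_filter, Finset.mem_range, Finset.mem_union, Finset.mem_Ico] at hi ⊢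
    obtain ⟨hin, hP⟩ := hi
    have hik := hP.1
    by_cases h1 : i < p.length
    · exact Or.inl (Or.inr h1)
    · by_cases h2 : i + v.length ≤ p.length + w'.length
      · exact Or.inl (Or.inl ⟨hin, hP, by omega, h2⟩)
      · exact Or.inr ⟨by omega, by omega⟩
  have hB : (((Finset.range (p ++ w' ++ q).length).filter fun i =>
      (i + v.length ≤ (p ++ w' ++ q).length ∧
        ∀ j ∈ Finset.range v.length, (p ++ w' ++ q)[(i + j)]? = v[j]?) ∧
      p.length ≤ i ∧ i + v.length ≤ p.length + w'.length)).card ≤ nwCount w' v := by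
    unfold nwCount
    apply Finset.card_le_card_of_injOn (fun i => i - p.length)
    · intro i hi
      simp only [Finset.mem_coe, Finset.mem_filter, Finset.mem_range] at hi ⊢
      obtain ⟨hin, ⟨hik, hmatch⟩, hpi, hiw⟩ := hi
      refine ⟨by omega, by omega, fun j hj => ?_⟩
      have hj' : j < v.length := hj
      have h1 := hmatch j hj
      rw [← h1, ← mid_get p w' q (i - p.length + j) (by omega)]
      congr 1
      omega
    · intro a ha b hb h
      simp only [Finset.mem_coe, Finset.mem_filter, Finset.mem_range] at ha hb
      have h' : a - p.length = b - p.length := h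
      have hpa : p.length ≤ a := ha.2.2.1
      have hpb : p.length ≤ b := hb.2.2.1
      omega
  have hcard := Finset.card_le_card hsplit
  have h1 := Finset.card_union_le
    ((((Finset.range (p ++ w' ++ q).length).filter fun i =>
        (i + v.length ≤ (p ++ w' ++ q).length ∧
          ∀ j ∈ Finset.range v.length, (p ++ w' ++ q)[(i + j)]? = v[j]?) ∧
        p.length ≤ i ∧ i + v.length ≤ p.length + w'.length)
      ∪ Finset.range p.length))
    (Finset.Ico (p.length + w'.length + 1 - v.length)
        ((p ++ w' ++ q).length + 1 - v.length))
  have h2 := Finset.card_union_le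
    (((Finset.range (p ++ w' ++ q).length).filter fun i =>
        (i + v.length ≤ (p ++ w' ++ q).length ∧
          ∀ j ∈ Finset.range v.length, (p ++ w' ++ q)[(i + j)]? = v[j]?) ∧
        p.length ≤ i ∧ i + v.length ≤ p.length + w'.length))
    (Finset.range p.length)
  have h3 : (Finset.Ico (p.length + w'.length + 1 - v.length)
      ((p ++ w' ++ q).length + 1 - v.length)).card ≤ q.length := by
    rw [Nat.card_Ico]; omega
  have h4 : (Finset.range p.length).card = p.length := Finset.card_range _
  unfold nwCount at *
  omega

theorem stmt14 {S : Type*} [Fintype S] [DecidableEq S]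
    (w w' p q : List S) (d k : ℕ)
    (hsub : w = p ++ w' ++ q) (hd : p.length + q.length ≤ d)
    (v : List S) (hk : v.length = k) (hk1 : 1 ≤ k) :
    |(cycCount w v : ℤ) - (cycCount w' v : ℤ)| ≤ (d : ℤ) + 2 * k := by
  subst hsub hk
  have h1 : cycCount (p ++ w' ++ q) v ≤ cycCount w' v + (d + 2 * v.length) := by
    have a1 := cyc_le_nw (p ++ w' ++ q) v
    have a2 := nw_upper p w' q v hk1
    have a3 := nw_le_cyc w' v
    omega
  have h2 : cycCount w' v ≤ cycCount (p ++ w' ++ q) v + (d + 2 * v.length) := by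
    have a1 := cyc_le_nw w' v
    have a2 := nw_mono p w' q v
    have a3 := nw_le_cyc (p ++ w' ++ q) v
    omega
  rw [abs_sub_le_iff]
  constructor <;> omega
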